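/- arXiv:2106.06259 — 3 statements merged into one kernel-verified Lean document; each statement's English description precedes it below -/
import Mathlib

section
/- Finite-step Moser iteration inequality. Let β > 1 be a real number, C ≥ 1 a constant, μ a measure on a measurable space X, and f : X → ℝ measurable with f ≥ 0 μ-a.e. Let p ≥ 1 be a real number with ‖f‖_{L^p(μ)} < ∞, and assume that for every real q ≥ 1, ‖f‖_{L^{qβ}(μ)} ≤ (q C)^{1/q} ‖f‖_{L^q(μ)}. Then for every natural number k, ‖f‖_{L^{pβ^k}(μ)} ≤ p^{S_k/p} · β^{T_k/p} · C^{S_k/p} · ‖f‖_{L^p(μ)}, where S_k := Σ_{j=0}^{k−1} β^{−j} and T_k := Σ_{j=0}^{k−1} j·β^{−j}. -/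
open MeasureTheory

/-- The `L^p`-norm `(∫ |f|^p dμ)^(1/p)` for a real exponent `0 < p < ∞`. -/
noncomputable def lpNorm {X : Type*} [MeasurableSpace X] (μ : Measure X)
    (f : X → ℝ) (p : ℝ) : ℝ :=
  (∫ x, |f x| ^ p ∂μ) ^ (1 / p)

/-- Finite-step Moser iteration inequality. -/
theorem moser_iteration_finite_step
    {X : Type*} [MeasurableSpace X] (μ : Measure X)
    (β : ℝ) (hβ : 1 < β) (C : ℝ) (hC : 1 ≤ C)
    (f : X → ℝ) (hfmeas : Measurable f) (hf0 : ∀ᵐ x ∂μ, 0 ≤ f x)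
    (p : ℝ) (hp : 1 ≤ p) (hfp : Integrable (fun x => |f x| ^ p) μ)
    (H : ∀ q : ℝ, 1 ≤ q →
      lpNorm μ f (q * β) ≤ (q * C) ^ (1 / q) * lpNorm μ f q) :
    ∀ k : ℕ,
      lpNorm μ f (p * β ^ k)
        ≤ p ^ ((∑ j ∈ Finset.range k, (1 / β) ^ j) / p)
          * β ^ ((∑ j ∈ Finset.range k, (j : ℝ) * (1 / β) ^ j) / p)
          * C ^ ((∑ j ∈ Finset.range k, (1 / β) ^ j) / p)
          * lpNorm μ f p := by
  have hβ0 : (0:ℝ) < β := lt_trans one_pos hβ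
  have hp0 : (0:ℝ) < p := lt_of_lt_of_le one_pos hp
  have hC0 : (0:ℝ) < C := lt_of_lt_of_le one_pos hC
  intro k
  induction k with
  | zero => simp
  | succ k ih =>
    have hβk : (1:ℝ) ≤ β ^ k := one_le_pow₀ hβ.le
    have hq1 : 1 ≤ p * β ^ k := by nlinarith
    have hq0 : 0 < p * β ^ k := by positivity
    have h1 := H (p * β ^ k) hq1
    have hstep : p * β ^ (k+1) = (p * β ^ k) * β := by ring
    set a : ℝ := 1 / (p * β ^ k) with ha
    have key : ((p * β ^ k) * C) ^ a = p ^ a * β ^ ((k:ℝ) * a) * C ^ a := by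
      rw [Real.mul_rpow hq0.le hC0.le, Real.mul_rpow hp0.le (pow_nonneg hβ0.le k),
        ← Real.rpow_natCast β k, ← Real.rpow_mul hβ0.le]
    have e1 : (∑ j ∈ Finset.range (k+1), (1 / β) ^ j) / p
        = (∑ j ∈ Finset.range k, (1 / β) ^ j) / p + a := by
      rw [Finset.sum_range_succ, add_div, ha]
      congr 1
      rw [div_pow, one_pow]
      field_simp
    have e2 : (∑ j ∈ Finset.range (k+1), (j : ℝ) * (1 / β) ^ j) / p
        = (∑ j ∈ Finset.range k, (j : ℝ) * (1 / β) ^ j) / p + (k:ℝ) * a := by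
      rw [Finset.sum_range_succ, add_div, ha]
      congr 1
      rw [div_pow, one_pow]
      field_simp
    calc lpNorm μ f (p * β ^ (k+1))
        = lpNorm μ f ((p * β ^ k) * β) := by rw [hstep]
      _ ≤ ((p * β ^ k) * C) ^ a * lpNorm μ f (p * β ^ k) := h1
      _ ≤ ((p * β ^ k) * C) ^ a *
            (p ^ ((∑ j ∈ Finset.range k, (1 / β) ^ j) / p)
              * β ^ ((∑ j ∈ Finset.range k, (j : ℝ) * (1 / β) ^ j) / p)
              * C ^ ((∑ j ∈ Finset.range k, (1 / β) ^ j) / p)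
              * lpNorm μ f p) :=
          mul_le_mul_of_nonneg_left ih (Real.rpow_nonneg (by positivity) _)
      _ = _ := by
          rw [e1, e2, Real.rpow_add hp0, Real.rpow_add hβ0, Real.rpow_add hC0, key]
          ring
end

section
/- L¹ bound from a Poincaré-type variance control on a sublevel-set-charged function. Let μ be a finite measure on a measurable space X with total mass V := μ(X) > 0. Let g : X → ℝ be measurable with g ≥ 0 μ-a.e. and g ∈ L²(μ), and set m := (1/V)∫_X g dμ. Let a ≥ 0, δ > 0 and C ≥ 0, and assume: (i) μ({x ∈ X : g(x) < a}) ≥ δ; (ii) ∫_X (g − m)² dμ ≤ C ∫_X g dμ. Then ∫_X g dμ ≤ (a₀/2 + (b₀ + a₀²/4)^{1/2})², where a₀ := V^{3/2} C^{1/2} / δ and b₀ := a·V² / δ. -/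
open MeasureTheory

/-- `L¹` bound from a Poincaré-type variance control on a
sublevel-set-charged function. -/
theorem L1_bound_from_variance_control
    {X : Type*} [MeasurableSpace X] (μ : Measure X) [IsFiniteMeasure μ]
    (V : ℝ) (hV : V = (μ Set.univ).toReal) (hVpos : 0 < V)
    (g : X → ℝ) (hgmeas : Measurable g) (hg0 : ∀ᵐ x ∂μ, 0 ≤ g x)
    (hgL2 : MemLp g 2 μ)
    (m : ℝ) (hm : m = (1 / V) * ∫ x, g x ∂μ)
    (a δ C : ℝ) (ha : 0 ≤ a) (hδ : 0 < δ) (hC : 0 ≤ C)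
    (h1 : δ ≤ (μ {x | g x < a}).toReal)
    (h2 : ∫ x, (g x - m) ^ 2 ∂μ ≤ C * ∫ x, g x ∂μ)
    (a₀ b₀ : ℝ)
    (ha₀ : a₀ = V ^ ((3 : ℝ) / 2) * Real.sqrt C / δ)
    (hb₀ : b₀ = a * V ^ 2 / δ) :
    ∫ x, g x ∂μ ≤ (a₀ / 2 + Real.sqrt (b₀ + a₀ ^ 2 / 4)) ^ 2 := by
  set I := ∫ x, g x ∂μ with hI
  have hInt : Integrable g μ := hgL2.integrable one_le_two
  have hI0 : 0 ≤ I := integral_nonneg_of_ae hg0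
  have hfm : MemLp (fun x => g x - m) 2 μ := hgL2.sub (memLp_const m)
  have hVm : I = V * m := by
    rw [hm]; field_simp
  have hrpow : V ^ ((3 : ℝ) / 2) = V * Real.sqrt V := by
    have h32 : ((3 : ℝ) / 2) = 1 + (1 : ℝ) / 2 := by norm_num
    rw [h32, Real.rpow_add hVpos, Real.rpow_one, Real.sqrt_eq_rpow]
  have ha₀0 : 0 ≤ a₀ := by
    rw [ha₀, hrpow]
    positivity
  have hδV : δ ≤ V := by
    refine h1.trans ?_
    rw [hV]
    exact ENNReal.toReal_mono (measure_ne_top μ _) (measure_mono (Set.subset_univ _))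
  have haVb : a * V ≤ b₀ := by
    rw [hb₀, le_div_iff₀ hδ]
    nlinarith [mul_nonneg ha hVpos.le]
  -- key quadratic inequality
  have key : I ≤ a * V + a₀ * Real.sqrt I := by
    rcases le_or_gt m a with hma | hma
    · have : I ≤ a * V := by
        rw [hVm]
        calc V * m ≤ V * a := mul_le_mul_of_nonneg_left hma hVpos.le
          _ = a * V := mul_comm _ _
      exact this.trans (by nlinarith [Real.sqrt_nonneg I, mul_nonneg ha₀0 (Real.sqrt_nonneg I)])
    · set S := {x | g x < a} with hSdef
      have hS : MeasurableSet S := measurableSet_lt hgmeas measurable_const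
      -- step 1
      have step1 : (m - a) * δ ≤ ∫ x in S, (m - g x) ∂μ := by
        have hma0 : 0 ≤ m - a := by linarith
        have h11 : (m - a) * δ ≤ (m - a) * (μ S).toReal :=
          mul_le_mul_of_nonneg_left h1 hma0
        have h12 : ∫ _ in S, (m - a) ∂μ = (μ S).toReal • (m - a) := setIntegral_const _
        have h13 : ∫ _ in S, (m - a) ∂μ ≤ ∫ x in S, (m - g x) ∂μ := by
          refine setIntegral_mono_on (integrable_const _).integrableOn
            ((integrable_const m).sub hInt).integrableOn hS ?_
          intro x hx
          have : g x < a := hx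
          linarith
        calc (m - a) * δ ≤ (m - a) * (μ S).toReal := h11
          _ = ∫ _ in S, (m - a) ∂μ := by rw [h12, smul_eq_mul, mul_comm]
          _ ≤ _ := h13
      -- step 2
      have step2 : ∫ x in S, (m - g x) ∂μ ≤ ∫ x, |g x - m| ∂μ := by
        have habs : Integrable (fun x => |g x - m|) μ := (hInt.sub (integrable_const m)).abs
        have h21 : ∫ x in S, (m - g x) ∂μ ≤ ∫ x in S, |g x - m| ∂μ := by
          refine integral_mono ((integrable_const m).sub hInt).integrableOn
            habs.integrableOn ?_
          intro x
          show m - g x ≤ |g x - m|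
          calc m - g x = -(g x - m) := by ring
            _ ≤ |g x - m| := neg_le_abs _
        refine h21.trans (setIntegral_le_integral habs ?_)
        exact Filter.Eventually.of_forall fun x => abs_nonneg _
      -- step 3: Cauchy-Schwarz
      have step3 : ∫ x, |g x - m| ∂μ ≤ Real.sqrt V * Real.sqrt (∫ x, (g x - m) ^ 2 ∂μ) := by
        have hpq : Real.HolderConjugate 2 2 := by
          constructor <;> norm_num
        have hone : MemLp (fun _ : X => (1 : ℝ)) (ENNReal.ofReal 2) μ := by
          have : (ENNReal.ofReal 2) = 2 := by norm_num
          rw [this]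
          exact memLp_const 1
        have hfm2 : MemLp (fun x => g x - m) (ENNReal.ofReal 2) μ := by
          have : (ENNReal.ofReal 2) = 2 := by norm_num
          rw [this]; exact hfm
        have := integral_mul_norm_le_Lp_mul_Lq (μ := μ) hpq hfm2 hone
        simp only [norm_one, mul_one, Real.norm_eq_abs, Real.one_rpow] at this
        have heq1 : ∫ x, |g x - m| ^ (2:ℝ) ∂μ = ∫ x, (g x - m) ^ 2 ∂μ := by
          refine integral_congr_ae (Filter.Eventually.of_forall fun x => ?_)
          show |g x - m| ^ (2:ℝ) = (g x - m) ^ 2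
          rw [Real.rpow_two, sq_abs]
        have heq2 : ∫ _ : X, (1:ℝ) ∂μ = V := by
          simp [hV, Measure.real]
        rw [heq1, heq2] at this
        refine this.trans ?_
        rw [Real.sqrt_eq_rpow, Real.sqrt_eq_rpow, mul_comm]
      -- step 4
      have hvar0 : 0 ≤ ∫ x, (g x - m) ^ 2 ∂μ :=
        integral_nonneg fun x => sq_nonneg _
      have step4 : Real.sqrt (∫ x, (g x - m) ^ 2 ∂μ) ≤ Real.sqrt C * Real.sqrt I := by
        rw [← Real.sqrt_mul hC]
        exact Real.sqrt_le_sqrt h2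
      have hchain : (m - a) * δ ≤ Real.sqrt V * (Real.sqrt C * Real.sqrt I) := by
        calc (m - a) * δ ≤ ∫ x in S, (m - g x) ∂μ := step1
          _ ≤ ∫ x, |g x - m| ∂μ := step2
          _ ≤ Real.sqrt V * Real.sqrt (∫ x, (g x - m) ^ 2 ∂μ) := step3
          _ ≤ Real.sqrt V * (Real.sqrt C * Real.sqrt I) :=
            mul_le_mul_of_nonneg_left step4 (Real.sqrt_nonneg _)
      have hmle : m - a ≤ Real.sqrt V * Real.sqrt C * Real.sqrt I / δ := by
        rw [le_div_iff₀ hδ]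
        nlinarith [hchain]
      have hfin : I ≤ V * (a + Real.sqrt V * Real.sqrt C * Real.sqrt I / δ) :=
        calc I = V * m := hVm
          _ ≤ V * (a + Real.sqrt V * Real.sqrt C * Real.sqrt I / δ) :=
            mul_le_mul_of_nonneg_left (by linarith) hVpos.le
      refine hfin.trans (le_of_eq ?_)
      rw [ha₀, hrpow]
      ring
  -- finish: quadratic root estimate
  have key2 : I ≤ b₀ + a₀ * Real.sqrt I := by
    nlinarith [key, haVb]
  set x := Real.sqrt I with hx
  have hx2 : x ^ 2 = I := Real.sq_sqrt hI0
  have hx0 : 0 ≤ x := Real.sqrt_nonneg I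
  have hquad : (x - a₀ / 2) ^ 2 ≤ b₀ + a₀ ^ 2 / 4 := by nlinarith
  have hxle : x ≤ a₀ / 2 + Real.sqrt (b₀ + a₀ ^ 2 / 4) := by
    have h := Real.sqrt_le_sqrt hquad
    rw [Real.sqrt_sq_eq_abs] at h
    have := le_abs_self (x - a₀ / 2)
    linarith
  calc I = x ^ 2 := hx2.symm
    _ ≤ (a₀ / 2 + Real.sqrt (b₀ + a₀ ^ 2 / 4)) ^ 2 := by
      exact pow_le_pow_left₀ hx0 hxle 2
end

section
/- Sublevel-set volume bound for a function normalized by its essential infimum, under a Moser-iteration hypothesis. Let n ≥ 2 be an integer and β = n/(n−1). Let μ be a finite measure on a measurable space X with V := μ(X), let C₁ ≥ 1, and let ρ : X → ℝ be measurable with ρ ≥ 1 μ-a.e. and essential infimum essinf_μ ρ = 1. Assume that for every real p ≥ 1, ‖ρ⁻¹‖_{L^{pβ}(μ)} ≤ (p C₁)^{1/p} ‖ρ⁻¹‖_{L^p(μ)}. Set δ := 1/(2 β^{n(n−1)} C₁^n). Then ∫_X ρ⁻¹ dμ ≥ 2δ, and μ({x ∈ X : ρ(x) < V/δ}) ≥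 δ. -/
open MeasureTheory Filter

/-- Sublevel-set volume bound for a function normalized by its essential
infimum, under a Moser-iteration hypothesis. -/
theorem sublevel_volume_bound_of_moser
    {X : Type*} [MeasurableSpace X] (μ : Measure X) [IsFiniteMeasure μ]
    (n : ℕ) (hn : 2 ≤ n) (β : ℝ) (hβ : β = (n : ℝ) / ((n : ℝ) - 1))
    (V : ℝ) (hV : V = (μ Set.univ).toReal)
    (C₁ : ℝ) (hC₁ : 1 ≤ C₁)
    (ρ : X → ℝ) (hρmeas : Measurable ρ)
    (hρ1 : ∀ᵐ x ∂μ, 1 ≤ ρ x)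
    (hessinf : essInf ρ μ = 1)
    (H1 : ∀ p : ℝ, 1 ≤ p →
      lpNorm μ (fun x => (ρ x)⁻¹) (p * β)
        ≤ (p * C₁) ^ (1 / p) * lpNorm μ (fun x => (ρ x)⁻¹) p)
    (δ : ℝ) (hδ : δ = 1 / (2 * β ^ (n * (n - 1)) * C₁ ^ n)) :
    2 * δ ≤ ∫ x, (ρ x)⁻¹ ∂μ ∧ δ ≤ (μ {x | ρ x < V / δ}).toReal := by
  set f : X → ℝ := fun x => (ρ x)⁻¹ with hf
  -- numeric setup
  have hn2 : (2 : ℝ) ≤ (n : ℝ) := by exact_mod_cast hn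
  have hn1' : (0 : ℝ) < (n : ℝ) - 1 := by linarith
  have hβ1 : 1 < β := by rw [hβ, lt_div_iff₀ hn1']; linarith
  have hβ0 : (0 : ℝ) < β := by linarith
  have hC₁0 : (0 : ℝ) < C₁ := by linarith
  set B : ℝ := β ^ (n * (n - 1)) * C₁ ^ n with hB
  have hB0 : 0 < B := by positivity
  have hδ' : δ = 1 / (2 * B) := by rw [hδ, hB]; ring_nf
  have hδ0 : 0 < δ := by rw [hδ']; positivity
  -- μ ≠ 0
  have hμ0 : μ ≠ 0 := by
    intro h
    rw [h, essInf, ae_zero, Filter.liminf_eq] at hessinf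
    simp only [Filter.eventually_bot, Set.setOf_true] at hessinf
    rw [Real.sSup_univ] at hessinf
    norm_num at hessinf
  have hne : (ae μ).NeBot := ae_neBot.2 hμ0
  -- sublevel sets of ρ have positive measure above the essInf
  have hsub : ∀ c : ℝ, 1 < c → μ {x | ρ x < c} ≠ 0 := by
    intro c hc h0
    have hae : ∀ᵐ x ∂μ, c ≤ ρ x := by rw [ae_iff]; simpa [not_le] using h0
    have hcb : IsCoboundedUnder (· ≥ ·) (ae μ) ρ := by
      obtain ⟨M, hM⟩ : ∃ M : ℕ, μ {x | ρ x ≤ (M : ℝ)} ≠ 0 := by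
        by_contra h; push_neg at h
        have h2 : ∀ᵐ x ∂μ, ∀ M : ℕ, ¬ ρ x ≤ (M : ℝ) :=
          (ae_all_iff).2 fun M => by rw [ae_iff]; simpa using h M
        obtain ⟨x, hx⟩ := h2.exists
        obtain ⟨M, hMx⟩ := exists_nat_ge (ρ x)
        exact hx M hMx
      refine ⟨(M : ℝ), fun a ha => ?_⟩
      rw [Filter.eventually_map] at ha
      by_contra hlt
      push_neg at hlt
      have hsub2 : {x | ρ x ≤ (M : ℝ)} ⊆ {x | ¬ a ≤ ρ x} := fun x hx => by
        simp only [Set.mem_setOf_eq, not_le] at *; linarith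
      exact hM (measure_mono_null hsub2 (ae_iff.1 ha))
    have hle : c ≤ essInf ρ μ := by
      have := Filter.liminf_le_liminf (f := ae μ) (u := fun _ => c) (v := ρ) hae
        ⟨c, Filter.eventually_map.2 (Eventually.of_forall fun _ => le_rfl)⟩ hcb
      rwa [Filter.liminf_const] at this
    rw [hessinf] at hle
    linarith
  -- basic facts about f
  have hae_f : ∀ᵐ x ∂μ, 0 ≤ f x ∧ f x ≤ 1 ∧ |f x| = f x := by
    refine hρ1.mono fun x hx => ?_
    have hx0 : (0:ℝ) < ρ x := by linarith
    have h0 : 0 ≤ (ρ x)⁻¹ := by positivity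
    exact ⟨h0, inv_le_one_of_one_le₀ hx, abs_of_nonneg h0⟩
  have hfm : Measurable f := hρmeas.inv
  have hIq : ∀ q : ℝ, 0 ≤ q → Integrable (fun x => |f x| ^ q) μ := by
    intro q hq
    refine (integrable_const (1:ℝ)).mono' (hfm.abs.pow_const q).aestronglyMeasurable ?_
    refine hae_f.mono fun x hx => ?_
    rw [Real.norm_eq_abs, abs_of_nonneg (Real.rpow_nonneg (abs_nonneg _) q)]
    exact Real.rpow_le_one (abs_nonneg _) (by rw [hx.2.2]; exact hx.2.1) hq
  have hInt : Integrable f μ :=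
    (hIq 1 zero_le_one).congr (hae_f.mono fun x hx => by simp [Real.rpow_one, hx.2.2])
  set I : ℝ := ∫ x, f x ∂μ with hIdef
  have hI0 : 0 ≤ I := integral_nonneg_of_ae (hae_f.mono fun x hx => hx.1)
  have hL1 : lpNorm μ f 1 = I := by
    have h1 : (∫ x, |f x| ^ (1:ℝ) ∂μ) = I :=
      integral_congr_ae (hae_f.mono fun x hx => by simp [Real.rpow_one, hx.2.2])
    rw [_root_.lpNorm, h1]; norm_num
  -- Moser iteration
  have iter : ∀ N : ℕ, lpNorm μ f (β ^ N)
      ≤ (∏ k ∈ Finset.range N, (β ^ k * C₁) ^ ((1:ℝ) / β ^ k)) * I := by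
    intro N
    induction N with
    | zero => simp [hL1.symm, pow_zero]
    | succ N ih =>
      have hstep := H1 (β ^ N) (one_le_pow₀ hβ1.le)
      rw [← hL1]
      rw [← hL1] at ih
      calc lpNorm μ f (β ^ (N+1)) = lpNorm μ f (β ^ N * β) := by rw [pow_succ]
        _ ≤ (β ^ N * C₁) ^ ((1:ℝ) / β ^ N) * lpNorm μ f (β ^ N) := hstep
        _ ≤ (β ^ N * C₁) ^ ((1:ℝ) / β ^ N) *
            ((∏ k ∈ Finset.range N, (β ^ k * C₁) ^ ((1:ℝ) / β ^ k)) * lpNorm μ f 1) :=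
          mul_le_mul_of_nonneg_left ih (Real.rpow_nonneg (by positivity) _)
        _ = (∏ k ∈ Finset.range (N+1), (β ^ k * C₁) ^ ((1:ℝ) / β ^ k)) * lpNorm μ f 1 := by
          rw [Finset.prod_range_succ]; ring
  -- bound on the products
  set r : ℝ := β⁻¹ with hrdef
  have hr0 : 0 ≤ r := by positivity
  have hr1 : r < 1 := inv_lt_one_of_one_lt₀ hβ1
  have hrval : r = ((n:ℝ) - 1) / (n:ℝ) := by rw [hrdef, hβ, inv_div]
  have prodB : ∀ N : ℕ, (∏ k ∈ Finset.range N, (β ^ k * C₁) ^ ((1:ℝ) / β ^ k)) ≤ B := by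
    intro N
    have hsum1 : ∑ k ∈ Finset.range N, r ^ k ≤ (n : ℝ) := by
      have h := Summable.sum_le_tsum (Finset.range N) (fun k _ => pow_nonneg hr0 k)
        (summable_geometric_of_lt_one hr0 hr1)
      rw [tsum_geometric_of_lt_one hr0 hr1] at h
      refine h.trans (le_of_eq ?_)
      rw [hrval]
      field_simp
      ring
    have hsum2 : ∑ k ∈ Finset.range N, (k : ℝ) * r ^ k ≤ (n : ℝ) * ((n:ℝ) - 1) := by
      have hs := (hasSum_coe_mul_geometric_of_norm_lt_one (𝕜 := ℝ) (r := r)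
        (by rwa [Real.norm_eq_abs, abs_of_nonneg hr0])).summable
      have h := Summable.sum_le_tsum (Finset.range N)
        (fun k _ => mul_nonneg (Nat.cast_nonneg k) (pow_nonneg hr0 k)) hs
      rw [tsum_coe_mul_geometric_of_norm_lt_one
        (by rwa [Real.norm_eq_abs, abs_of_nonneg hr0])] at h
      refine h.trans (le_of_eq ?_)
      rw [hrval]
      have hne0 : (n:ℝ) ≠ 0 := by linarith
      field_simp
      ring
    have hfac : ∀ k : ℕ, (β ^ k * C₁) ^ ((1:ℝ) / β ^ k)
        = β ^ ((k:ℝ) * r ^ k) * C₁ ^ (r ^ k) := by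
      intro k
      have h1k : (1:ℝ) / β ^ k = r ^ k := by rw [one_div, hrdef, inv_pow]
      rw [h1k, Real.mul_rpow (by positivity) hC₁0.le]
      congr 1
      rw [← Real.rpow_natCast β k, ← Real.rpow_mul hβ0.le]
    calc (∏ k ∈ Finset.range N, (β ^ k * C₁) ^ ((1:ℝ) / β ^ k))
        = (∏ k ∈ Finset.range N, β ^ ((k:ℝ) * r ^ k)) *
          (∏ k ∈ Finset.range N, C₁ ^ (r ^ k)) := by
          rw [← Finset.prod_mul_distrib]
          exact Finset.prod_congr rfl fun k _ => hfac k
      _ = β ^ (∑ k ∈ Finset.range N, (k:ℝ) * r ^ k) *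
          C₁ ^ (∑ k ∈ Finset.range N, r ^ k) := by
          rw [Real.rpow_sum_of_pos hβ0, Real.rpow_sum_of_pos hC₁0]
      _ ≤ β ^ ((n:ℝ) * ((n:ℝ) - 1)) * C₁ ^ ((n:ℝ)) := by
          apply mul_le_mul (Real.rpow_le_rpow_of_exponent_le hβ1.le hsum2)
            (Real.rpow_le_rpow_of_exponent_le hC₁ hsum1)
            (Real.rpow_nonneg hC₁0.le _) (Real.rpow_nonneg hβ0.le _)
      _ = B := by
          rw [hB]
          have hcast : (n:ℝ) * ((n:ℝ) - 1) = ((n * (n - 1) : ℕ) : ℝ) := by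
            push_cast [Nat.cast_sub (show 1 ≤ n by omega)]
            ring
          rw [hcast, Real.rpow_natCast, Real.rpow_natCast]
  -- main inequality 1 ≤ B * I
  have main : (1:ℝ) ≤ B * I := by
    by_contra hlt
    push_neg at hlt
    set ε : ℝ := (1 - B * I) / 2 with hεdef
    have hBIpos : 0 ≤ B * I := mul_nonneg hB0.le hI0
    have hε0 : 0 < ε := by rw [hεdef]; linarith
    have hε1 : ε < 1 := by rw [hεdef]; linarith
    suffices h : 1 - ε ≤ B * I by rw [hεdef] at h; linarith
    have hc : 1 < (1 - ε)⁻¹ := (one_lt_inv₀ (by linarith)).2 (by linarith)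
    have hA := hsub ((1 - ε)⁻¹) hc
    set m : ℝ := (μ {x | ρ x < (1 - ε)⁻¹}).toReal with hmdef
    have hm0 : 0 < m := ENNReal.toReal_pos hA (measure_ne_top μ _)
    have hbd : ∀ N : ℕ, (1 - ε) * m ^ (((β:ℝ) ^ N)⁻¹) ≤ B * I := by
      intro N
      set q : ℝ := β ^ N with hqdef
      have hq1 : (1:ℝ) ≤ q := one_le_pow₀ hβ1.le
      have hq0 : (0:ℝ) < q := lt_of_lt_of_le one_pos hq1
      have hAm : MeasurableSet {x | ρ x < (1 - ε)⁻¹} :=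
        measurableSet_lt hρmeas measurable_const
      have hlow : (1 - ε) ^ q * m ≤ ∫ x, |f x| ^ q ∂μ := by
        have h1 : ∫ _ in {x | ρ x < (1 - ε)⁻¹}, ((1 - ε) ^ q : ℝ) ∂μ
            ≤ ∫ x in {x | ρ x < (1 - ε)⁻¹}, |f x| ^ q ∂μ := by
          refine setIntegral_mono_on_ae (integrable_const _).integrableOn
            ((hIq q hq0.le).integrableOn) hAm ?_
          refine (hρ1.and hae_f).mono fun x hx hxA => ?_
          have hx1 : (1:ℝ) ≤ ρ x := hx.1
          have hxlt : ρ x < (1 - ε)⁻¹ := hxA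
          have hfx : 1 - ε ≤ f x := by
            rw [hf]
            have h0 : (0:ℝ) < ρ x := by linarith
            rw [← inv_inv (1 - ε)]
            exact inv_anti₀ (by positivity) hxlt.le
          rw [hx.2.2.2]
          exact Real.rpow_le_rpow (by linarith) hfx hq0.le
        have h2 : ∫ x in {x | ρ x < (1 - ε)⁻¹}, |f x| ^ q ∂μ ≤ ∫ x, |f x| ^ q ∂μ :=
          setIntegral_le_integral (hIq q hq0.le)
            (hae_f.mono fun x hx => Real.rpow_nonneg (abs_nonneg _) q)
        rw [setIntegral_const, smul_eq_mul, measureReal_def, ← hmdef, mul_comm] at h1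
        linarith
      have hup : lpNorm μ f q ≤ B * I :=
        (iter N).trans (mul_le_mul_of_nonneg_right (prodB N) hI0)
      have hrpow := Real.rpow_le_rpow (mul_nonneg (Real.rpow_nonneg (by linarith) q) hm0.le) hlow (le_of_lt (by positivity : (0:ℝ) < 1/q))
      rw [Real.mul_rpow (Real.rpow_nonneg (by linarith) q) hm0.le,
        ← Real.rpow_mul (by linarith : (0:ℝ) ≤ 1 - ε), mul_one_div_cancel hq0.ne',
        Real.rpow_one] at hrpow
      have : (1 - ε) * m ^ ((1:ℝ)/q) ≤ lpNorm μ f q := hrpow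
      rw [one_div] at this
      exact this.trans hup
    have hlim : Tendsto (fun N : ℕ => (1 - ε) * m ^ (((β:ℝ) ^ N)⁻¹)) atTop
        (nhds ((1 - ε) * 1)) := by
      apply Tendsto.const_mul
      have h1 : Tendsto (fun N : ℕ => ((β:ℝ) ^ N)⁻¹) atTop (nhds 0) := by
        simpa [inv_pow] using
          tendsto_pow_atTop_nhds_zero_of_lt_one (inv_nonneg.2 hβ0.le) (inv_lt_one_of_one_lt₀ hβ1)
      have h2 : ContinuousAt (fun y : ℝ => m ^ y) 0 :=
        Real.continuousAt_const_rpow hm0.ne'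
      simpa [Real.rpow_zero, Function.comp_def] using h2.tendsto.comp h1
    have := le_of_tendsto hlim (Eventually.of_forall hbd)
    rwa [mul_one] at this
  -- Part 1
  have part1 : 2 * δ ≤ I := by
    have h2δ : 2 * δ = 1 / B := by rw [hδ']; field_simp
    rw [h2δ, div_le_iff₀ hB0]
    linarith [main, mul_comm B I]
  refine ⟨part1, ?_⟩
  -- Part 2
  have hV0 : 0 < V := by
    rw [hV]
    refine ENNReal.toReal_pos ?_ (measure_ne_top μ _)
    simpa [Measure.measure_univ_eq_zero] using hμ0
  have hVδ : 0 < V / δ := by positivity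
  set S := {x | ρ x < V / δ} with hSdef
  have hSm : MeasurableSet S := measurableSet_lt hρmeas measurable_const
  have hsplit : ∫ x in S, f x ∂μ + ∫ x in Sᶜ, f x ∂μ = I := integral_add_compl hSm hInt
  have h1 : ∫ x in S, f x ∂μ ≤ (μ S).toReal := by
    have := setIntegral_mono_on_ae (μ := μ) (s := S) hInt.integrableOn
      (integrable_const (1:ℝ)).integrableOn hSm
      (hae_f.mono fun x hx _ => hx.2.1)
    rwa [setIntegral_const, smul_eq_mul, mul_one] at this
  have h2 : ∫ x in Sᶜ, f x ∂μ ≤ δ := by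
    have hstep : ∫ x in Sᶜ, f x ∂μ ≤ ∫ _ in Sᶜ, (δ / V : ℝ) ∂μ := by
      refine setIntegral_mono_on_ae hInt.integrableOn
        (integrable_const _).integrableOn hSm.compl ?_
      refine hρ1.mono fun x hx hxc => ?_
      have hge : V / δ ≤ ρ x := not_lt.1 hxc
      have h0 : (0:ℝ) < ρ x := lt_of_lt_of_le hVδ hge
      rw [hf]
      calc (ρ x)⁻¹ ≤ (V / δ)⁻¹ := inv_anti₀ hVδ hge
        _ = δ / V := by rw [inv_div]
    have hmeasle : (μ Sᶜ).toReal ≤ V := by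
      rw [hV]
      exact ENNReal.toReal_mono (measure_ne_top μ _) (measure_mono (Set.subset_univ _))
    calc ∫ x in Sᶜ, f x ∂μ ≤ (μ Sᶜ).toReal * (δ / V) := by
          rwa [setIntegral_const, smul_eq_mul] at hstep
      _ ≤ V * (δ / V) := mul_le_mul_of_nonneg_right hmeasle (by positivity)
      _ = δ := by field_simp
  linarith [hsplit, h1, h2, part1]
end
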